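/- The identity (x₁^k + (1+x₂^k)^k)/(x₁^k x₂) = ((1+x₁^k)/x₂)·((1+x₂^k)^k/x₁^k) − Σ_{j=1}^{k} C(k,j) x₂^{kj−1} holds in ℚ(x₁,x₂), where C(k,j) is the binomial coefficient; consequently (x₁^k + (1+x₂^k)^k)/(x₁^k x₂) ∈ ℚ[x₁, x₂, (1+x₂^k)/x₁, (1+x₁^k)/x₂]. -/

import Mathlib

noncomputable abbrev K : Type := FractionRing (MvPolynomial (Fin 2) ℚ)
noncomputable abbrev x1 : K := algebraMap (MvPolynomial (Fin 2) ℚ) K (MvPolynomial.X 0)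
noncomputable abbrev x2 : K := algebraMap (MvPolynomial (Fin 2) ℚ) K (MvPolynomial.X 1)

set_option maxHeartbeats 800000 in
/-- the identity
(x₁^k + (1+x₂^k)^k)/(x₁^k x₂) = ((1+x₁^k)/x₂)·((1+x₂^k)^k/x₁^k) − Σ_{j=1}^k C(k,j) x₂^{kj−1}
holds in ℚ(x₁,x₂), and consequently the left-hand side lies in
ℚ[x₁, x₂, (1+x₂^k)/x₁, (1+x₁^k)/x₂]. -/
theorem stmt_12 (k : ℕ) (hk : 1 ≤ k) :
    (x1 ^ k + (1 + x2 ^ k) ^ k) / (x1 ^ k * x2)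
        = ((1 + x1 ^ k) / x2) * ((1 + x2 ^ k) ^ k / x1 ^ k)
          - ∑ j ∈ Finset.Icc 1 k, (k.choose j : K) * x2 ^ (k * j - 1) ∧
    (x1 ^ k + (1 + x2 ^ k) ^ k) / (x1 ^ k * x2)
      ∈ Algebra.adjoin ℚ ({x1, x2, (1 + x2 ^ k) / x1, (1 + x1 ^ k) / x2} : Set K) := by
  have hx1 : x1 ≠ 0 := by
    simp only [Ne, IsFractionRing.to_map_eq_zero_iff]
    exact MvPolynomial.X_ne_zero 0
  have hx2 : x2 ≠ 0 := by
    simp only [Ne, IsFractionRing.to_map_eq_zero_iff]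
    exact MvPolynomial.X_ne_zero 1
  set S : K := ∑ j ∈ Finset.Icc 1 k, (k.choose j : K) * x2 ^ (k * j - 1) with hSdef
  have hS : S * x2 = (1 + x2 ^ k) ^ k - 1 := by
    have hpow : (x2 ^ k + 1) ^ k
        = ∑ j ∈ Finset.range (k + 1), x2 ^ (k * j) * (k.choose j : K) := by
      rw [add_pow]
      refine Finset.sum_congr rfl fun j _ => ?_
      rw [one_pow, mul_one, ← pow_mul]
    have hsum : S * x2 = ∑ j ∈ Finset.Icc 1 k, (k.choose j : K) * x2 ^ (k * j) := by
      rw [hSdef, Finset.sum_mul]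
      refine Finset.sum_congr rfl fun j hj => ?_
      have hj1 : 1 ≤ j := (Finset.mem_Icc.mp hj).1
      have hkj : 1 ≤ k * j := Nat.one_le_iff_ne_zero.mpr (Nat.mul_ne_zero
        (Nat.one_le_iff_ne_zero.mp hk) (Nat.one_le_iff_ne_zero.mp hj1))
      rw [mul_assoc, ← pow_succ, Nat.sub_add_cancel hkj]
    have hcomm : (1 + x2 ^ k) ^ k = (x2 ^ k + 1) ^ k := by ring
    rw [hsum, hcomm, hpow, Finset.sum_range_succ']
    simp only [Nat.mul_zero, pow_zero, Nat.choose_zero_right, Nat.cast_one, one_mul]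
    rw [add_sub_cancel_right, ← Finset.Ico_add_one_right_eq_Icc, Finset.sum_Ico_eq_sum_range]
    refine Finset.sum_congr rfl fun i _ => ?_
    rw [Nat.add_comm 1 i, mul_comm]
  have hne : x1 ^ k * x2 ≠ 0 := mul_ne_zero (pow_ne_zero _ hx1) hx2
  have key : (x1 ^ k + (1 + x2 ^ k) ^ k) / (x1 ^ k * x2)
      = ((1 + x1 ^ k) / x2) * ((1 + x2 ^ k) ^ k / x1 ^ k) - S := by
    rw [div_eq_iff hne]
    field_simp
    linear_combination (x1 ^ k) * hS
  refine ⟨key, ?_⟩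
  rw [key]
  have h1 : x1 ∈ Algebra.adjoin ℚ ({x1, x2, (1 + x2 ^ k) / x1, (1 + x1 ^ k) / x2} : Set K) :=
    Algebra.subset_adjoin (by simp)
  have h2 : x2 ∈ Algebra.adjoin ℚ ({x1, x2, (1 + x2 ^ k) / x1, (1 + x1 ^ k) / x2} : Set K) :=
    Algebra.subset_adjoin (by simp)
  have h3 : (1 + x2 ^ k) / x1
      ∈ Algebra.adjoin ℚ ({x1, x2, (1 + x2 ^ k) / x1, (1 + x1 ^ k) / x2} : Set K) :=
    Algebra.subset_adjoin (by simp)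
  have h4 : (1 + x1 ^ k) / x2
      ∈ Algebra.adjoin ℚ ({x1, x2, (1 + x2 ^ k) / x1, (1 + x1 ^ k) / x2} : Set K) :=
    Algebra.subset_adjoin (by simp)
  have hdivpow : (1 + x2 ^ k) ^ k / x1 ^ k = ((1 + x2 ^ k) / x1) ^ k := (div_pow _ _ k).symm
  rw [hdivpow]
  refine Subalgebra.sub_mem _ (Subalgebra.mul_mem _ h4 (Subalgebra.pow_mem _ h3 k)) ?_
  refine Subalgebra.sum_mem _ fun j _ => ?_
  exact Subalgebra.mul_mem _ (Subalgebra.natCast_mem _ _) (Subalgebra.pow_mem _ h2 _)
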